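/- For the matrix kernel K_R(p,q) = U(R⁻¹p) − U(R⁻¹(p−q)), where U(p) = a₊(p)I₄ + a₋(p)β(α·p)/|p|, one has the uniform bound sup_{p,q ∈ ℝ³} |K_R(p,q)|/(1+|q|) ≤ C/R for some constant C depending only on m, c. -/

import Mathlib

noncomputable section
open MeasureTheory Filter Set Matrix
open scoped Real ENNReal RealInnerProductSpace FourierTransform

abbrev R3 : Type := EuclideanSpace ℝ (Fin 3)
abbrev C4 : Type := EuclideanSpace ℂ (Fin 4)
abbrev C2 : Type := EuclideanSpace ℂ (Fin 2)

/-- `λ(p) = √(c²|p|² + m²c⁴)` -/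
def lam (m c : ℝ) (p : R3) : ℝ := Real.sqrt (c ^ 2 * ‖p‖ ^ 2 + m ^ 2 * c ^ 4)

/-- `a₊(p) = √((1 + mc²/λ(p))/2)` -/
def aplus (m c : ℝ) (p : R3) : ℝ := Real.sqrt ((1 + m * c ^ 2 / lam m c p) / 2)

/-- `a₋(p) = √((1 − mc²/λ(p))/2)` -/
def aminus (m c : ℝ) (p : R3) : ℝ := Real.sqrt ((1 - m * c ^ 2 / lam m c p) / 2)

/-- The Pauli matrices σ₁, σ₂, σ₃. -/
def pauli : Fin 3 → Matrix (Fin 2) (Fin 2) ℂ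
  | 0 => !![0, 1; 1, 0]
  | 1 => !![0, -Complex.I; Complex.I, 0]
  | 2 => !![1, 0; 0, -1]

/-- Assemble a 4×4 matrix from 2×2 blocks. -/
def block4 (A B C D : Matrix (Fin 2) (Fin 2) ℂ) : Matrix (Fin 4) (Fin 4) ℂ :=
  Matrix.reindex finSumFinEquiv finSumFinEquiv (Matrix.fromBlocks A B C D)

/-- The Dirac matrix β = diag(I₂, −I₂). -/
def diracBeta : Matrix (Fin 4) (Fin 4) ℂ := block4 1 0 0 (-1)

/-- The Dirac matrices αₖ with σₖ in the off-diagonal blocks. -/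
def diracAlpha (k : Fin 3) : Matrix (Fin 4) (Fin 4) ℂ :=
  block4 0 (pauli k) (pauli k) 0

/-- `α·p = α₁p₁ + α₂p₂ + α₃p₃`. -/
def alphaDot (p : R3) : Matrix (Fin 4) (Fin 4) ℂ := ∑ k : Fin 3, (p k : ℂ) • diracAlpha k

/-- `U(p) = a₊(p) I₄ + a₋(p) β (α·p)/|p|`. -/
def Umat (m c : ℝ) (p : R3) : Matrix (Fin 4) (Fin 4) ℂ :=
  (aplus m c p : ℂ) • 1 + ((aminus m c p / ‖p‖ : ℝ) : ℂ) • (diracBeta * alphaDot p)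

/-- `U(p)⁻¹ = a₊(p) I₄ − a₋(p) β (α·p)/|p|`. -/
def UmatInv (m c : ℝ) (p : R3) : Matrix (Fin 4) (Fin 4) ℂ :=
  (aplus m c p : ℂ) • 1 - ((aminus m c p / ‖p‖ : ℝ) : ℂ) • (diracBeta * alphaDot p)


set_option maxHeartbeats 1000000
set_option synthInstance.maxHeartbeats 400000
set_option linter.unusedSectionVars false

section Aux

lemma block4_mul (A B C D A' B' C' D' : Matrix (Fin 2) (Fin 2) ℂ) :
    block4 A B C D * block4 A' B' C' D' =
      block4 (A*A'+B*C') (A*B'+B*D') (C*A'+D*C') (C*B'+D*D') := by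
  simp only [block4, reindex_apply, submatrix_mul_equiv, fromBlocks_multiply]

lemma block4_one : block4 1 0 0 1 = 1 := by
  simp only [block4, reindex_apply, fromBlocks_one, submatrix_one_equiv]

lemma block4_conjT (A B C D : Matrix (Fin 2) (Fin 2) ℂ) :
    (block4 A B C D)ᴴ = block4 Aᴴ Cᴴ Bᴴ Dᴴ := by
  simp only [block4, reindex_apply, conjTranspose_submatrix, fromBlocks_conjTranspose]

lemma pauli_herm (k : Fin 3) : (pauli k)ᴴ = pauli k := by
  fin_cases k <;> ext i j <;> fin_cases i <;> fin_cases j <;>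
    simp [pauli, conjTranspose_apply, Complex.ext_iff]

lemma pauli_sq (k : Fin 3) : pauli k * pauli k = 1 := by
  fin_cases k <;> simp [pauli, mul_fin_two] <;> norm_num [Complex.ext_iff, ← Matrix.one_fin_two]

lemma beta_herm : diracBetaᴴ = diracBeta := by
  simp [diracBeta, block4_conjT]
lemma beta_sq : diracBeta * diracBeta = 1 := by
  simp [diracBeta, block4_mul, block4_one]
lemma alpha_herm (k : Fin 3) : (diracAlpha k)ᴴ = diracAlpha k := by
  simp [diracAlpha, block4_conjT, pauli_herm]
lemma alpha_sq (k : Fin 3) : diracAlpha k * diracAlpha k = 1 := by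
  simp [diracAlpha, block4_mul, pauli_sq, block4_one]

open scoped Matrix.Norms.L2Operator

lemma matrix_norm_one : ‖(1 : Matrix (Fin 4) (Fin 4) ℂ)‖ = 1 := by
  rw [Matrix.cstar_norm_def, _root_.map_one]
  exact ContinuousLinearMap.norm_id

lemma norm_unitary (N : Matrix (Fin 4) (Fin 4) ℂ) (h1 : Nᴴ * N = 1) : ‖N‖ = 1 := by
  have h2 := Matrix.l2_opNorm_conjTranspose_mul_self N
  rw [h1, matrix_norm_one] at h2
  nlinarith [norm_nonneg N]


def hco (m c : ℝ) (k : Fin 3) (p : R3) : ℝ := aminus m c p / ‖p‖ * p k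

lemma Umat_decomp (m c : ℝ) (p : R3) :
    Umat m c p = (aplus m c p : ℂ) • 1 +
      ∑ k : Fin 3, ((hco m c k p : ℝ) : ℂ) • (diracBeta * diracAlpha k) := by
  rw [Umat, alphaDot, Finset.mul_sum]
  congr 1
  rw [Finset.smul_sum]
  refine Finset.sum_congr rfl fun k _ => ?_
  rw [mul_smul_comm, smul_smul, hco]
  push_cast
  ring_nf

lemma norm_T_le (m c : ℝ) (x y : R3) :
    ‖Matrix.toEuclideanCLM (𝕜 := ℂ) (Umat m c x - Umat m c y)‖ ≤
      |aplus m c x - aplus m c y| + ∑ k : Fin 3, |hco m c k x - hco m c k y| := by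
  rw [← Matrix.cstar_norm_def]
  have hd : Umat m c x - Umat m c y =
      (((aplus m c x - aplus m c y : ℝ)) : ℂ) • (1 : Matrix (Fin 4) (Fin 4) ℂ) +
      ∑ k : Fin 3, (((hco m c k x - hco m c k y : ℝ)) : ℂ) • (diracBeta * diracAlpha k) := by
    rw [Umat_decomp, Umat_decomp]
    push_cast
    rw [sub_smul, add_sub_add_comm]
    congr 1
    rw [← Finset.sum_sub_distrib]
    exact Finset.sum_congr rfl fun k _ => (sub_smul _ _ _).symm
  rw [hd]
  refine (norm_add_le _ _).trans (add_le_add ?_ ?_)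
  · rw [norm_smul, matrix_norm_one, Complex.norm_real, Real.norm_eq_abs, mul_one]
  · refine (norm_sum_le _ _).trans ?_
    refine Finset.sum_le_sum fun k _ => ?_
    rw [norm_smul, Complex.norm_real, Real.norm_eq_abs]
    have hun : ‖diracBeta * diracAlpha k‖ = 1 := by
      apply norm_unitary
      rw [Matrix.conjTranspose_mul, beta_herm, alpha_herm, Matrix.mul_assoc,
        ← Matrix.mul_assoc diracBeta, beta_sq, Matrix.one_mul, alpha_sq]
    rw [hun, mul_one]

def sfun (m c : ℝ) (p : R3) : ℝ := Real.sqrt (2 * lam m c p * (lam m c p + m * c ^ 2))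

variable {m c : ℝ} (hm : 0 < m) (hc : 0 < c)

lemma coord_abs (v : R3) (k : Fin 3) : |v k| ≤ ‖v‖ := by
  rw [EuclideanSpace.norm_eq]
  have h : |v k| ^ 2 ≤ ∑ i, ‖v i‖ ^ 2 := by
    have := Finset.single_le_sum (f := fun i => ‖v i‖ ^ 2) (fun i _ => sq_nonneg _)
      (Finset.mem_univ k)
    simpa [Real.norm_eq_abs, sq_abs] using this
  calc |v k| = Real.sqrt (|v k| ^ 2) := (Real.sqrt_sq (abs_nonneg _)).symm
  _ ≤ _ := Real.sqrt_le_sqrt h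

include hm hc

lemma lam_sq (p : R3) : lam m c p ^ 2 = c ^ 2 * ‖p‖ ^ 2 + m ^ 2 * c ^ 4 :=
  Real.sq_sqrt (by positivity)

lemma lam_ge_k (p : R3) : m * c ^ 2 ≤ lam m c p := by
  rw [lam]
  calc m * c ^ 2 = Real.sqrt ((m * c ^ 2) ^ 2) := (Real.sqrt_sq (by positivity)).symm
  _ ≤ _ := Real.sqrt_le_sqrt (by nlinarith [sq_nonneg ‖p‖, norm_nonneg p])

lemma lam_ge_cp (p : R3) : c * ‖p‖ ≤ lam m c p := by
  rw [lam]
  calc c * ‖p‖ = Real.sqrt ((c * ‖p‖) ^ 2) := (Real.sqrt_sq (by positivity)).symm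
  _ ≤ _ := Real.sqrt_le_sqrt (by nlinarith [sq_nonneg (m * c ^ 2)])

lemma lam_pos (p : R3) : 0 < lam m c p := lt_of_lt_of_le (by positivity) (lam_ge_k hm hc p)

lemma lam_lip_one (a b : R3) : lam m c a - lam m c b ≤ c * ‖a - b‖ := by
  have h1 := lam_sq hm hc a
  have h2 := lam_sq hm hc b
  have hpa := lam_pos hm hc a
  have hpb := lam_pos hm hc b
  have hca := lam_ge_cp hm hc a
  have hcb := lam_ge_cp hm hc b
  have hn1 : ‖a‖ - ‖b‖ ≤ ‖a - b‖ := (abs_le.mp (abs_norm_sub_norm_le a b)).2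
  have hna := norm_nonneg a; have hnb := norm_nonneg b; have hnd := norm_nonneg (a - b)
  have key : (lam m c a - lam m c b) * (lam m c a + lam m c b) ≤
      (c * ‖a - b‖) * (lam m c a + lam m c b) := by
    calc (lam m c a - lam m c b) * (lam m c a + lam m c b)
        = c ^ 2 * ((‖a‖ - ‖b‖) * (‖a‖ + ‖b‖)) := by linear_combination h1 - h2
      _ ≤ c ^ 2 * (‖a - b‖ * (‖a‖ + ‖b‖)) := by
          have := mul_le_mul_of_nonneg_right hn1 (add_nonneg hna hnb)
          nlinarith [sq_nonneg c]
      _ = (c * ‖a - b‖) * (c * ‖a‖ + c * ‖b‖) := by ring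
      _ ≤ (c * ‖a - b‖) * (lam m c a + lam m c b) := by
          have h3 : c * ‖a‖ + c * ‖b‖ ≤ lam m c a + lam m c b := add_le_add hca hcb
          nlinarith [mul_nonneg hc.le hnd]
  exact le_of_mul_le_mul_right key (by positivity)

lemma lam_lip (a b : R3) : |lam m c a - lam m c b| ≤ c * ‖a - b‖ := by
  rw [abs_sub_le_iff]
  refine ⟨lam_lip_one hm hc a b, ?_⟩
  rw [norm_sub_rev]
  exact lam_lip_one hm hc b a

lemma aplus_sum_ge (a b : R3) : 1 ≤ aplus m c a + aplus m c b := by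
  have h : ∀ p : R3, (1:ℝ)/2 ≤ aplus m c p := by
    intro p
    have hd : (0:ℝ) ≤ m * c ^ 2 / lam m c p :=
      div_nonneg (by positivity) (lam_pos hm hc p).le
    rw [aplus]
    calc (1:ℝ)/2 = Real.sqrt ((1/2)^2) := (Real.sqrt_sq (by norm_num)).symm
    _ ≤ _ := Real.sqrt_le_sqrt (by nlinarith)
  linarith [h a, h b]

lemma aplus_sq (p : R3) : aplus m c p ^ 2 = (1 + m * c ^ 2 / lam m c p) / 2 := by
  rw [aplus]
  refine Real.sq_sqrt ?_
  have hd : (0:ℝ) ≤ m * c ^ 2 / lam m c p :=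
    div_nonneg (by positivity) (lam_pos hm hc p).le
  linarith

lemma aplus_lip (a b : R3) : |aplus m c a - aplus m c b| ≤ 1 / (m * c) * ‖a - b‖ := by
  have hpa := lam_pos hm hc a
  have hpb := lam_pos hm hc b
  have hka := lam_ge_k hm hc a
  have hkb := lam_ge_k hm hc b
  have hll := lam_lip hm hc a b
  have hs := aplus_sum_ge hm hc a b
  have hd : aplus m c a ^ 2 - aplus m c b ^ 2 =
      m * c ^ 2 * (lam m c b - lam m c a) / (2 * lam m c a * lam m c b) := by
    rw [aplus_sq hm hc, aplus_sq hm hc]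
    field_simp
    ring
  -- |aplus a ^2 - aplus b ^2| ≤ ‖a-b‖/(2*m*c)
  have habs : |aplus m c a ^ 2 - aplus m c b ^ 2| ≤ ‖a - b‖ / (2 * m * c) := by
    rw [hd, abs_div, abs_of_pos (by positivity : (0:ℝ) < 2 * lam m c a * lam m c b), abs_mul,
      abs_of_pos (by positivity : (0:ℝ) < m * c ^ 2), abs_sub_comm]
    rw [div_le_div_iff₀ (by positivity) (by positivity)]
    calc m * c ^ 2 * |lam m c a - lam m c b| * (2 * m * c)
        ≤ m * c ^ 2 * (c * ‖a - b‖) * (2 * m * c) := by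
          have h := mul_le_mul_of_nonneg_left hll (by positivity : (0:ℝ) ≤ m * c ^ 2)
          exact mul_le_mul_of_nonneg_right h (by positivity)
      _ = ‖a - b‖ * (2 * (m * c ^ 2) * (m * c ^ 2)) := by ring
      _ ≤ ‖a - b‖ * (2 * lam m c a * lam m c b) := by
          have h1 : m * c ^ 2 * (m * c ^ 2) ≤ lam m c a * lam m c b :=
            mul_le_mul hka hkb (by positivity) (by linarith)
          nlinarith [norm_nonneg (a - b)]
  have key : |aplus m c a - aplus m c b| * 1 ≤ |aplus m c a - aplus m c b| *
      (aplus m c a + aplus m c b) := by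
    have h0 : (0:ℝ) ≤ |aplus m c a - aplus m c b| := abs_nonneg _
    nlinarith
  have h2 : |aplus m c a - aplus m c b| * (aplus m c a + aplus m c b) =
      |aplus m c a ^ 2 - aplus m c b ^ 2| := by
    rw [← abs_of_nonneg (by positivity : (0:ℝ) ≤ aplus m c a + aplus m c b), ← abs_mul]
    congr 1
    ring
  rw [mul_one] at key
  calc |aplus m c a - aplus m c b| ≤ |aplus m c a ^ 2 - aplus m c b ^ 2| := by rw [← h2]; exact key
  _ ≤ ‖a - b‖ / (2 * m * c) := habs
  _ ≤ 1 / (m * c) * ‖a - b‖ := by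
      have he : 1 / (m * c) * ‖a - b‖ = ‖a - b‖ / (m * c) := by ring
      rw [he, div_le_div_iff₀ (by positivity) (by positivity)]
      nlinarith [norm_nonneg (a - b), mul_nonneg (norm_nonneg (a - b)) (mul_pos hm hc).le]

lemma sfun_sq (p : R3) : sfun m c p ^ 2 = 2 * lam m c p * (lam m c p + m * c ^ 2) := by
  have h1 := lam_pos hm hc p
  have h2 := lam_ge_k hm hc p
  exact Real.sq_sqrt (by nlinarith [mul_pos h1 h1, mul_pos h1 (mul_pos hm (pow_pos hc 2))])

lemma sfun_ge_2k (p : R3) : 2 * (m * c ^ 2) ≤ sfun m c p := by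
  have h1 := lam_pos hm hc p
  have h2 := lam_ge_k hm hc p
  rw [sfun]
  calc 2 * (m * c ^ 2) = Real.sqrt ((2 * (m * c ^ 2)) ^ 2) := (Real.sqrt_sq (by positivity)).symm
  _ ≤ _ := Real.sqrt_le_sqrt (by
      nlinarith [mul_le_mul_of_nonneg_right h2 (by positivity : (0:ℝ) ≤ m * c ^ 2),
        mul_le_mul_of_nonneg_left h2 h1.le, mul_pos hm (pow_pos hc 2)])

lemma sfun_ge_cp (p : R3) : c * ‖p‖ ≤ sfun m c p := by
  have h1 := lam_pos hm hc p
  have h2 := lam_ge_cp hm hc p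
  have h3 := lam_ge_k hm hc p
  have h4 := norm_nonneg p
  rw [sfun]
  calc c * ‖p‖ = Real.sqrt ((c * ‖p‖) ^ 2) := (Real.sqrt_sq (by positivity)).symm
  _ ≤ _ := Real.sqrt_le_sqrt (by
      nlinarith [mul_le_mul h2 h2 (by positivity) h1.le,
        mul_pos h1 (mul_pos hm (pow_pos hc 2))])

lemma sfun_ge_lam (p : R3) : lam m c p ≤ sfun m c p := by
  have h1 := lam_pos hm hc p
  have h2 := lam_ge_k hm hc p
  rw [sfun]
  calc lam m c p = Real.sqrt (lam m c p ^ 2) := (Real.sqrt_sq h1.le).symm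
  _ ≤ _ := Real.sqrt_le_sqrt (by
      nlinarith [mul_pos h1 h1, mul_pos h1 (mul_pos hm (pow_pos hc 2))])

lemma sfun_pos (p : R3) : 0 < sfun m c p := lt_of_lt_of_le (by positivity) (sfun_ge_2k hm hc p)

lemma sfun_lip_one (a b : R3) : sfun m c a - sfun m c b ≤ 3 * c * ‖a - b‖ := by
  have h1 := sfun_sq hm hc a
  have h2 := sfun_sq hm hc b
  have hla := lam_pos hm hc a
  have hlb := lam_pos hm hc b
  have hsa := sfun_pos hm hc a
  have hsb := sfun_pos hm hc b
  have hga := sfun_ge_lam hm hc a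
  have hgb := sfun_ge_lam hm hc b
  have h2ka := sfun_ge_2k hm hc a
  have h2kb := sfun_ge_2k hm hc b
  have hll := abs_le.mp (lam_lip hm hc a b)
  have hnd := norm_nonneg (a - b)
  have key : (sfun m c a - sfun m c b) * (sfun m c a + sfun m c b) ≤
      (3 * c * ‖a - b‖) * (sfun m c a + sfun m c b) := by
    calc (sfun m c a - sfun m c b) * (sfun m c a + sfun m c b)
        = (lam m c a - lam m c b) * (2 * (lam m c a + lam m c b) + 2 * (m * c ^ 2)) := by
          linear_combination h1 - h2
      _ ≤ (c * ‖a - b‖) * (2 * (lam m c a + lam m c b) + 2 * (m * c ^ 2)) := by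
          have hpos : (0:ℝ) ≤ 2 * (lam m c a + lam m c b) + 2 * (m * c ^ 2) := by positivity
          exact mul_le_mul_of_nonneg_right hll.2 hpos
      _ ≤ (c * ‖a - b‖) * (3 * (sfun m c a + sfun m c b)) := by
          have hb : 2 * (lam m c a + lam m c b) + 2 * (m * c ^ 2) ≤
              3 * (sfun m c a + sfun m c b) := by nlinarith
          exact mul_le_mul_of_nonneg_left hb (by positivity)
      _ = (3 * c * ‖a - b‖) * (sfun m c a + sfun m c b) := by ring
  exact le_of_mul_le_mul_right key (by positivity)

lemma sfun_lip (a b : R3) : |sfun m c a - sfun m c b| ≤ 3 * c * ‖a - b‖ := by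
  rw [abs_sub_le_iff]
  refine ⟨sfun_lip_one hm hc a b, ?_⟩
  rw [norm_sub_rev]
  exact sfun_lip_one hm hc b a

lemma hco_eq (k : Fin 3) (p : R3) : hco m c k p = c * p k / sfun m c p := by
  by_cases hp : p = 0
  · subst hp
    simp [hco]
  · have hnp : (0:ℝ) < ‖p‖ := norm_pos_iff.mpr hp
    have hla := lam_pos hm hc p
    have hk := lam_ge_k hm hc p
    have hs := sfun_pos hm hc p
    have hss := sfun_sq hm hc p
    have hlsq := lam_sq hm hc p
    have ham : aminus m c p = c * ‖p‖ / sfun m c p := by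
      have harg : (1 - m * c ^ 2 / lam m c p) / 2 = (c * ‖p‖ / sfun m c p) ^ 2 := by
        rw [div_pow, hss]
        field_simp
        nlinarith [hlsq]
      rw [aminus, harg, Real.sqrt_sq (by positivity)]
    rw [hco, ham]
    field_simp

lemma hco_lip (k : Fin 3) (a b : R3) :
    |hco m c k a - hco m c k b| ≤ 2 / (m * c) * ‖a - b‖ := by
  have hsa := sfun_pos hm hc a
  have hsb := sfun_pos hm hc b
  have h2ka := sfun_ge_2k hm hc a
  have hcb := sfun_ge_cp hm hc b
  have hsl := sfun_lip hm hc a b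
  have hnd := norm_nonneg (a - b)
  have hck : |a k - b k| ≤ ‖a - b‖ := by
    have := coord_abs (a - b) k
    simpa using this
  have hbk : |b k| ≤ ‖b‖ := coord_abs b k
  rw [hco_eq hm hc, hco_eq hm hc]
  have hsplit : c * a k / sfun m c a - c * b k / sfun m c b =
      c * (a k - b k) / sfun m c a +
      c * b k * (sfun m c b - sfun m c a) / (sfun m c a * sfun m c b) := by
    field_simp
    ring
  rw [hsplit]
  refine (abs_add_le _ _).trans ?_
  have t1 : |c * (a k - b k) / sfun m c a| ≤ 1 / (2 * (m * c)) * ‖a - b‖ := by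
    rw [abs_div, abs_of_pos hsa, abs_mul, abs_of_pos hc]
    calc c * |a k - b k| / sfun m c a ≤ c * ‖a - b‖ / (2 * (m * c ^ 2)) := by
          apply div_le_div₀ (by positivity) (mul_le_mul_of_nonneg_left hck hc.le)
            (by positivity) h2ka
      _ = 1 / (2 * (m * c)) * ‖a - b‖ := by field_simp
  have t2 : |c * b k * (sfun m c b - sfun m c a) / (sfun m c a * sfun m c b)| ≤
      3 / (2 * (m * c)) * ‖a - b‖ := by
    rw [abs_div, abs_of_pos (mul_pos hsa hsb), abs_mul, abs_mul, abs_of_pos hc, abs_sub_comm]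
    have hnum : c * |b k| * |sfun m c a - sfun m c b| ≤ (3 * c * ‖a - b‖) * sfun m c b := by
      calc c * |b k| * |sfun m c a - sfun m c b| ≤ c * |b k| * (3 * c * ‖a - b‖) := by
            apply mul_le_mul_of_nonneg_left hsl (by positivity)
        _ = (3 * c * ‖a - b‖) * (c * |b k|) := by ring
        _ ≤ (3 * c * ‖a - b‖) * sfun m c b := by
            apply mul_le_mul_of_nonneg_left _ (by positivity)
            calc c * |b k| ≤ c * ‖b‖ := mul_le_mul_of_nonneg_left hbk hc.le
            _ ≤ sfun m c b := hcb
    calc c * |b k| * |sfun m c a - sfun m c b| / (sfun m c a * sfun m c b)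
        ≤ (3 * c * ‖a - b‖) * sfun m c b / (sfun m c a * sfun m c b) := by
          apply div_le_div_of_nonneg_right ?_ (mul_pos hsa hsb).le
          exact hnum
      _ = 3 * c * ‖a - b‖ / sfun m c a := by
          field_simp
      _ ≤ 3 * c * ‖a - b‖ / (2 * (m * c ^ 2)) := by
          apply div_le_div₀ (by positivity) le_rfl (by positivity) h2ka
      _ = 3 / (2 * (m * c)) * ‖a - b‖ := by field_simp
  calc |c * (a k - b k) / sfun m c a| +
      |c * b k * (sfun m c b - sfun m c a) / (sfun m c a * sfun m c b)|
      ≤ 1 / (2 * (m * c)) * ‖a - b‖ + 3 / (2 * (m * c)) * ‖a - b‖ := add_le_add t1 t2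
    _ = 2 / (m * c) * ‖a - b‖ := by field_simp; ring

end Aux

/-- Uniform bound for the kernel `K_R(p,q) = U(R⁻¹p) − U(R⁻¹(p−q))` in operator norm:
`|K_R(p,q)| ≤ C (1+|q|)/R` with `C = C(m,c)`. -/
theorem kernel_estimate (m c : ℝ) (hm : 0 < m) (hc : 0 < c) :
    ∃ C : ℝ, 0 < C ∧ ∀ R : ℝ, 0 < R → ∀ p q : R3,
      ‖Matrix.toEuclideanCLM (𝕜 := ℂ) (Umat m c (R⁻¹ • p) - Umat m c (R⁻¹ • (p - q)))‖ ≤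
        C * (1 + ‖q‖) / R := by
  refine ⟨7 / (m * c), by positivity, ?_⟩
  intro R hR p q
  set x := R⁻¹ • p with hx
  set y := R⁻¹ • (p - q) with hy
  have hxy : ‖x - y‖ = ‖q‖ / R := by
    have hxe : x - y = R⁻¹ • q := by rw [hx, hy, ← smul_sub]; congr 1; abel
    rw [hxe, norm_smul, norm_inv, Real.norm_eq_abs, abs_of_pos hR]
    ring
  have h1 := norm_T_le m c x y
  have h2 := aplus_lip hm hc x y
  have h3 : ∑ k : Fin 3, |hco m c k x - hco m c k y| ≤ 3 * (2 / (m * c) * ‖x - y‖) := by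
    calc ∑ k : Fin 3, |hco m c k x - hco m c k y|
        ≤ ∑ _k : Fin 3, 2 / (m * c) * ‖x - y‖ :=
          Finset.sum_le_sum fun k _ => hco_lip hm hc k x y
      _ = 3 * (2 / (m * c) * ‖x - y‖) := by
          rw [Finset.sum_const]
          simp
  have hsplit : (7:ℝ) / (m * c) * ‖x - y‖ =
      1 / (m * c) * ‖x - y‖ + 3 * (2 / (m * c) * ‖x - y‖) := by ring
  calc ‖Matrix.toEuclideanCLM (𝕜 := ℂ) (Umat m c x - Umat m c y)‖
      ≤ 7 / (m * c) * ‖x - y‖ := by rw [hsplit]; linarith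
    _ = 7 / (m * c) * ‖q‖ / R := by rw [hxy]; ring
    _ ≤ 7 / (m * c) * (1 + ‖q‖) / R := by
        gcongr
        linarith [norm_nonneg q]
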